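/- Let A = k[[t^a, t^{a+1}]] with a ≥ 5 odd, write a = 2ℓ+1 with ℓ ≥ 2. Let 0 ≤ r ≤ ℓ, s = aℓ + r, Q = (t^s), and I = Q : 𝔪^{a−1}. Then the associated graded ring G(I) = ⊕_{n≥0} I^n/I^{n+1} is Cohen–Macaulay if and only if r = 0 or r = ℓ. -/

import Mathlib

set_option maxHeartbeats 1000000
set_option synthInstance.maxHeartbeats 1000000

open PowerSeries

/-- The numerical semigroup ring `k[[H]]`: power series supported on `H`. -/
noncomputable def ssr (k : Type) [Field k] (H : AddSubmonoid ℕ) :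
    Subalgebra k (PowerSeries k) where
  carrier := {f | ∀ n : ℕ, n ∉ H → PowerSeries.coeff n f = 0}
  mul_mem' := by
    intro f g hf hg n hn
    rw [Set.mem_setOf_eq] at hf hg
    rw [PowerSeries.coeff_mul]
    apply Finset.sum_eq_zero
    rintro ⟨i, j⟩ hij
    replace hij : i + j = n := by simpa using hij
    by_cases hi : i ∈ H
    · have hj : j ∉ H := fun hj => hn (hij ▸ H.add_mem hi hj)
      rw [hg j hj, mul_zero]
    · rw [hf i hi, zero_mul]
  add_mem' := by
    intro f g hf hg n hn
    rw [Set.mem_setOf_eq] at hf hg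
    rw [map_add, hf n hn, hg n hn, add_zero]
  one_mem' := by
    intro n hn
    have h0 : n ≠ 0 := fun h => hn (by rw [h]; exact H.zero_mem)
    simp [PowerSeries.coeff_one, h0]
  zero_mem' := by
    intro n _
    simp
  algebraMap_mem' := by
    intro r n hn
    have h0 : n ≠ 0 := fun h => hn (by rw [h]; exact H.zero_mem)
    simp [PowerSeries.algebraMap_apply, PowerSeries.coeff_C, h0]

/-- The monomial `t^n` as an element of `k[[H]]`, for `n ∈ H`. -/
noncomputable def tp (k : Type) [Field k] (H : AddSubmonoid ℕ) (n : ℕ) (hn : n ∈ H) :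
    ssr k H :=
  ⟨PowerSeries.X ^ n, by
    intro m hm
    rw [PowerSeries.coeff_X_pow]
    exact if_neg (fun h => hm (by rw [h]; exact hn))⟩

/-- The maximal ideal of `k[[H]]`, generated by the monomials `t^n`, `0 < n ∈ H`. -/
noncomputable def mIdeal (k : Type) [Field k] (H : AddSubmonoid ℕ) : Ideal (ssr k H) :=
  Ideal.span {x | ∃ n : ℕ, ∃ hn : n ∈ H, 0 < n ∧ x = tp k H n hn}

/-- membership predicate for the numerical semigroup `⟨a, a+1⟩`. -/
def NS (a n : ℕ) : Prop := ∃ u ρ : ℕ, ρ ≤ u ∧ n = u * a + ρ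

/-- `sumN P n m`: `m` is a sum of `n` values satisfying `P`. -/
def sumN (P : ℕ → Prop) : ℕ → ℕ → Prop
  | 0, m => m = 0
  | n+1, m => ∃ p q, sumN P n p ∧ P q ∧ m = p + q

/-- offsets of the generators of `I` over `s`. -/
def dc (ℓ r d : ℕ) : Prop := d ≤ ℓ - r ∨ (ℓ + (ℓ - r) + 1 ≤ d ∧ d ≤ 2*ℓ)

/-- the shape of `n`-fold sums of `dc ℓ ℓ` offsets. -/
def PatL (ℓ n d : ℕ) : Prop :=
  d = 0 ∨ (1 ≤ n ∧ ℓ+1 ≤ d ∧ d ≤ 2*ℓ) ∨ (2*ℓ+2 ≤ d ∧ d ≤ 2*n*ℓ)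

lemma NS_add {a m n : ℕ} (hm : NS a m) (hn : NS a n) : NS a (m + n) := by
  obtain ⟨u, ρ, h1, rfl⟩ := hm
  obtain ⟨v, σ, h2, rfl⟩ := hn
  exact ⟨u + v, ρ + σ, by omega, by ring⟩

lemma NS_zero (a : ℕ) : NS a 0 := ⟨0, 0, le_rfl, by simp⟩

lemma NS_intro {a u ρ : ℕ} (h : ρ ≤ u) : NS a (u * a + ρ) := ⟨u, ρ, h, rfl⟩

lemma NS_canon {a n : ℕ} (ha : 0 < a) (h : NS a n) :
    ∃ u ρ, ρ ≤ u ∧ ρ < a ∧ n = u * a + ρ := by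
  obtain ⟨u, ρ, h1, rfl⟩ := h
  obtain ⟨D, M, hDM, hMlt⟩ : ∃ D M, ρ = a * D + M ∧ M < a :=
    ⟨ρ / a, ρ % a, (Nat.div_add_mod ρ a).symm, Nat.mod_lt _ ha⟩
  refine ⟨u + D, M, by omega, hMlt, ?_⟩
  have h4 : (u + D) * a = u * a + a * D := by ring
  omega

lemma div_le {a u v ρ : ℕ} (hρ : ρ < a) (h : v * a ≤ u * a + ρ) : v ≤ u := by
  by_contra hc
  push_neg at hc
  have h1 : (u + 1) * a ≤ v * a := Nat.mul_le_mul_right a hc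
  have h2 : (u + 1) * a = u * a + a := by ring
  omega

lemma NS_conductor {ℓ n : ℕ} (h : 2*ℓ*(2*ℓ+1) ≤ n) : NS (2*ℓ+1) n := by
  have ha : 0 < 2*ℓ+1 := by omega
  refine ⟨n / (2*ℓ+1), n % (2*ℓ+1), ?_, ?_⟩
  · have h1 : 2*ℓ ≤ n / (2*ℓ+1) := (Nat.le_div_iff_mul_le ha).2 (by omega)
    have h2 : n % (2*ℓ+1) < 2*ℓ+1 := Nat.mod_lt _ ha
    omega
  · have h3 := Nat.div_add_mod n (2*ℓ+1)
    have h4 : n / (2*ℓ+1) * (2*ℓ+1) = (2*ℓ+1) * (n / (2*ℓ+1)) := by ring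
    omega

lemma NS_consec {ℓ b : ℕ} (h : ∀ j, j < 2*ℓ+1 → NS (2*ℓ+1) (b + j)) :
    2*ℓ*(2*ℓ+1) ≤ b := by
  have ha : 0 < 2*ℓ+1 := by omega
  obtain ⟨D, M, hDM, hMlt⟩ : ∃ D M, b = (2*ℓ+1) * D + M ∧ M < 2*ℓ+1 :=
    ⟨b / (2*ℓ+1), b % (2*ℓ+1), (Nat.div_add_mod b (2*ℓ+1)).symm, Nat.mod_lt _ ha⟩
  obtain ⟨u, ρ, hru, hra, heq⟩ := NS_canon ha (h (2*ℓ - M) (by omega))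
  have e1 : b + (2*ℓ - M) = (2*ℓ+1) * D + 2*ℓ := by omega
  have swap : D * (2*ℓ+1) = (2*ℓ+1) * D := by ring
  have c1 : u ≤ D := div_le (show 2*ℓ < 2*ℓ+1 by omega) (by omega)
  have c2 : D ≤ u := div_le hra (by omega)
  have hu : u = D := le_antisymm c1 c2
  subst hu
  have hρ : ρ = 2*ℓ := by omega
  have h3 : 2*ℓ*(2*ℓ+1) ≤ u * (2*ℓ+1) := Nat.mul_le_mul_right _ (by omega)
  omega

lemma NS_small {ℓ m : ℕ} (h : NS (2*ℓ+1) m) (hm : m ≤ 2*ℓ) : m = 0 := by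
  obtain ⟨u, ρ, h1, rfl⟩ := h
  rcases Nat.eq_zero_or_pos u with h2 | h2
  · have h3 : u * (2*ℓ+1) = 0 := by rw [h2]; ring
    omega
  · have h3 : 1 * (2*ℓ+1) ≤ u * (2*ℓ+1) := Nat.mul_le_mul_right _ h2
    omega

/-- decomposition of an element of the semigroup that is `≥ s` into a generator of
`I` plus a semigroup element. -/
lemma NS_decompose {ℓ r h : ℕ} (hr : r ≤ ℓ) (hNS : NS (2*ℓ+1) h)
    (hs : (2*ℓ+1)*ℓ + r ≤ h) :
    ∃ d h', dc ℓ r d ∧ NS (2*ℓ+1) h' ∧ h = ((2*ℓ+1)*ℓ + r) + d + h' := by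
  obtain ⟨u, ρ, hru, hra, rfl⟩ := NS_canon (by omega) hNS
  have swap : ℓ * (2*ℓ+1) = (2*ℓ+1) * ℓ := by ring
  have hu : ℓ ≤ u := div_le hra (by omega)
  obtain ⟨w, rfl⟩ : ∃ w, u = ℓ + w := ⟨u - ℓ, by omega⟩
  have expand : (ℓ + w) * (2*ℓ+1) = (2*ℓ+1)*ℓ + w * (2*ℓ+1) := by ring
  by_cases h1 : ρ ≤ ℓ
  · by_cases h2 : r ≤ ρ
    · exact ⟨ρ - r, w * (2*ℓ+1), Or.inl (by omega), ⟨w, 0, by omega, by omega⟩, by omega⟩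
    · push_neg at h2
      have hw : 1 ≤ w := by
        by_contra hw0
        push_neg at hw0
        interval_cases w <;> omega
      obtain ⟨w', rfl⟩ : ∃ w', w = 1 + w' := ⟨w - 1, by omega⟩
      have expand2 : (ℓ + (1 + w')) * (2*ℓ+1) = (2*ℓ+1)*ℓ + (2*ℓ+1) + w' * (2*ℓ+1) := by
        ring
      exact ⟨ℓ + (ℓ - r) + 1 + ρ, w' * (2*ℓ+1), Or.inr (by omega),
        ⟨w', 0, by omega, by omega⟩, by omega⟩
  · push_neg at h1
    refine ⟨ℓ - r, w * (2*ℓ+1) + (ρ - ℓ), Or.inl le_rfl, ⟨w, ρ - ℓ, by omega, rfl⟩, by omega⟩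

lemma dc_NS {ℓ r d : ℕ} (hr : r ≤ ℓ) (hd : dc ℓ r d) : NS (2*ℓ+1) ((2*ℓ+1)*ℓ + r + d) := by
  rcases hd with h | h
  · refine ⟨ℓ, r + d, by omega, ?_⟩
    have : ℓ * (2*ℓ+1) = (2*ℓ+1)*ℓ := by ring
    omega
  · refine ⟨ℓ+1, r + d - (2*ℓ+1), by omega, ?_⟩
    have : (ℓ+1) * (2*ℓ+1) = (2*ℓ+1)*ℓ + (2*ℓ+1) := by ring
    omega

lemma sumN_dc_NS {ℓ r : ℕ} (hr : r ≤ ℓ) :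
    ∀ n δ, sumN (dc ℓ r) n δ → NS (2*ℓ+1) (n * ((2*ℓ+1)*ℓ + r) + δ) := by
  intro n
  induction n with
  | zero =>
    intro δ hδ
    simp only [sumN] at hδ
    subst hδ
    simpa using NS_zero (2*ℓ+1)
  | succ n ih =>
    rintro δ ⟨p, q, hp, hq, rfl⟩
    have h1 := NS_add (ih p hp) (dc_NS hr hq)
    have e : (n+1) * ((2*ℓ+1)*ℓ + r) + (p + q)
        = n * ((2*ℓ+1)*ℓ + r) + p + ((2*ℓ+1)*ℓ + r + q) := by ring
    rwa [e]

lemma sumN_NS_decomp {ℓ r : ℕ} (hr : r ≤ ℓ) :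
    ∀ n τ, sumN (fun h => NS (2*ℓ+1) h ∧ (2*ℓ+1)*ℓ + r ≤ h) n τ →
      ∃ δ h', sumN (dc ℓ r) n δ ∧ NS (2*ℓ+1) h' ∧ τ = n * ((2*ℓ+1)*ℓ + r) + δ + h' := by
  intro n
  induction n with
  | zero =>
    intro τ hτ
    simp only [sumN] at hτ
    subst hτ
    exact ⟨0, 0, rfl, NS_zero _, by simp⟩
  | succ n ih =>
    rintro τ ⟨p, q, hp, ⟨hqNS, hqs⟩, rfl⟩
    obtain ⟨δ, h', hδ, hh', rfl⟩ := ih p hp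
    obtain ⟨d, h'', hd, hh'', rfl⟩ := NS_decompose hr hqNS hqs
    exact ⟨δ + d, h' + h'', ⟨δ, d, hδ, hd, rfl⟩, NS_add hh' hh'', by ring⟩

/-! ### the case `r = 0` -/

lemma pat0_fwd {ℓ : ℕ} : ∀ n δ, sumN (dc ℓ 0) n δ → δ ≤ n * ℓ := by
  intro n
  induction n with
  | zero => intro δ hδ; simp only [sumN] at hδ; omega
  | succ n ih =>
    rintro δ ⟨p, q, hp, hq, rfl⟩
    have h1 := ih p hp
    have h2 : q ≤ ℓ := by unfold dc at hq; omega
    have e : (n+1) * ℓ = n * ℓ + ℓ := by ring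
    omega

lemma pat0_bwd {ℓ : ℕ} : ∀ n δ, δ ≤ n * ℓ → sumN (dc ℓ 0) n δ := by
  intro n
  induction n with
  | zero => intro δ hδ; simp only [Nat.zero_mul, Nat.le_zero] at hδ; simpa [sumN] using hδ
  | succ n ih =>
    intro δ hδ
    have e : (n+1) * ℓ = n * ℓ + ℓ := by ring
    by_cases h1 : δ ≤ n * ℓ
    · exact ⟨δ, 0, ih δ h1, Or.inl (by omega), by omega⟩
    · exact ⟨n * ℓ, δ - n * ℓ, ih _ le_rfl, Or.inl (by omega), by omega⟩

lemma core0 {ℓ : ℕ} (n d h : ℕ) (hNSh : NS (2*ℓ+1) h)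
    (hNS : NS (2*ℓ+1) (n * ((2*ℓ+1)*ℓ) + (d + h))) :
    ∃ d' h', d' ≤ n * ℓ ∧ NS (2*ℓ+1) h' ∧ d + h = d' + h' := by
  obtain ⟨u, ρ, hρu, hρa, heq⟩ := NS_canon (by omega) hNS
  have e1 : (n * ℓ) * (2*ℓ+1) = n * ((2*ℓ+1)*ℓ) := by ring
  have hu : n * ℓ ≤ u := div_le hρa (by omega)
  obtain ⟨w, rfl⟩ : ∃ w, u = n * ℓ + w := ⟨u - n * ℓ, by omega⟩
  have e2 : (n * ℓ + w) * (2*ℓ+1) = n * ((2*ℓ+1)*ℓ) + w * (2*ℓ+1) := by ring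
  have hy : d + h = w * (2*ℓ+1) + ρ := by omega
  by_cases hc : ρ ≤ w
  · exact ⟨0, d + h, by omega, by rw [hy]; exact NS_intro hc, by omega⟩
  · exact ⟨ρ - w, w * (2*ℓ+1) + w, by omega, NS_intro le_rfl, by omega⟩

/-! ### the case `r = ℓ` -/

lemma patL_fwd {ℓ : ℕ} (hℓ : 2 ≤ ℓ) : ∀ n δ, sumN (dc ℓ ℓ) n δ → PatL ℓ n δ := by
  intro n
  induction n with
  | zero => intro δ hδ; simp only [sumN] at hδ; exact Or.inl hδ
  | succ n ih =>
    rintro δ ⟨p, q, hp, hq, rfl⟩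
    have h1 := ih p hp
    have hq' : q = 0 ∨ (ℓ+1 ≤ q ∧ q ≤ 2*ℓ) := by unfold dc at hq; omega
    have e1 : 2*(n+1)*ℓ = 2*n*ℓ + 2*ℓ := by ring
    have e2 : (2*1)*ℓ ≤ (2*n)*ℓ ∨ n = 0 := by
      rcases Nat.eq_zero_or_pos n with h | h
      · exact Or.inr h
      · exact Or.inl (Nat.mul_le_mul_right _ (by omega))
    have e3 : (2*1)*ℓ = 2*ℓ := by ring
    have e4 : 2*0*ℓ = 0 := by ring
    unfold PatL at h1 ⊢
    rcases hq' with rfl | hq'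
    · -- q = 0
      rcases h1 with h1 | h1 | h1
      · exact Or.inl (by omega)
      · exact Or.inr (Or.inl (by omega))
      · refine Or.inr (Or.inr (by omega))
    · rcases h1 with rfl | h1 | h1
      · exact Or.inr (Or.inl (by omega))
      · -- p ∈ [ℓ+1, 2ℓ], q ∈ [ℓ+1, 2ℓ]: sum in [2ℓ+2, 4ℓ] ⊆ third (n ≥ 1)
        rcases e2 with e2 | rfl
        · exact Or.inr (Or.inr (by omega))
        · omega
      · -- p in third interval
        rcases e2 with e2 | rfl
        · exact Or.inr (Or.inr (by omega))
        · omega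

lemma patL_bwd {ℓ : ℕ} (hℓ : 2 ≤ ℓ) : ∀ n δ, PatL ℓ n δ → sumN (dc ℓ ℓ) n δ := by
  intro n
  induction n with
  | zero =>
    intro δ hδ
    have e4 : 2*0*ℓ = 0 := by ring
    unfold PatL at hδ
    have : δ = 0 := by omega
    simpa [sumN] using this
  | succ n ih =>
    intro δ hδ
    have e1 : 2*(n+1)*ℓ = 2*n*ℓ + 2*ℓ := by ring
    have dcz : dc ℓ ℓ 0 := Or.inl (by omega)
    have patz : PatL ℓ n 0 := Or.inl rfl
    rcases hδ with rfl | ⟨-, hδ1, hδ2⟩ | ⟨hδ1, hδ2⟩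
    · exact ⟨0, 0, ih 0 patz, dcz, by omega⟩
    · exact ⟨0, δ, ih 0 patz, Or.inr (by omega), by omega⟩
    · -- third interval: 2ℓ+2 ≤ δ ≤ 2(n+1)ℓ
      have hn1 : 1 ≤ n := by
        by_contra hc
        push_neg at hc
        interval_cases n
        · have : 2*(0+1)*ℓ = 2*ℓ := by ring
          omega
      by_cases hc : δ ≤ 4*ℓ
      · -- two-generator decomposition
        by_cases hc2 : δ ≤ 3*ℓ+1
        · exact ⟨δ - (ℓ+1), ℓ+1, ih _ (Or.inr (Or.inl ⟨hn1, by omega, by omega⟩)),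
            Or.inr (by omega), by omega⟩
        · exact ⟨2*ℓ, δ - 2*ℓ, ih _ (Or.inr (Or.inl ⟨hn1, by omega, by omega⟩)),
            Or.inr (by omega), by omega⟩
      · -- δ > 4ℓ, so n ≥ 2
        have hn2 : 2 ≤ n := by
          by_contra hc2
          push_neg at hc2
          have : (2*(n+1))*ℓ ≤ (2*2)*ℓ := Nat.mul_le_mul_right _ (by omega)
          have e5 : (2*2)*ℓ = 4*ℓ := by ring
          have e6 : (2*(n+1))*ℓ = 2*(n+1)*ℓ := by ring
          omega
        have h2n : (2*2)*ℓ ≤ (2*n)*ℓ := Nat.mul_le_mul_right _ (by omega)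
        have e5 : (2*2)*ℓ = 4*ℓ := by ring
        by_cases hc3 : δ = 4*ℓ+1
        · exact ⟨2*ℓ+2, 2*ℓ-1, ih _ (Or.inr (Or.inr ⟨by omega, by omega⟩)),
            Or.inr (by omega), by omega⟩
        · exact ⟨δ - 2*ℓ, 2*ℓ, ih _ (Or.inr (Or.inr ⟨by omega, by omega⟩)),
            Or.inr (by omega), by omega⟩

/-- the key arithmetic fact for `r = ℓ`: an element `y ≥ a+1` with
`nℓ(a+1) + y` in the semigroup lies in `D_n + H`. -/
lemma starLem {ℓ n y : ℕ} (hℓ : 2 ≤ ℓ) (hn : 1 ≤ n) (hy : 2*ℓ+2 ≤ y)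
    (h : NS (2*ℓ+1) (n*ℓ*(2*ℓ+2) + y)) :
    ∃ d' h', PatL ℓ n d' ∧ NS (2*ℓ+1) h' ∧ y = d' + h' := by
  obtain ⟨q, ρ, hρq, hρa, heq⟩ := NS_canon (by omega) h
  have hq : n*ℓ ≤ q := by
    by_contra hc
    push_neg at hc
    have m1 : (q+1)*(2*ℓ+2) ≤ (n*ℓ)*(2*ℓ+2) := Nat.mul_le_mul_right _ (by omega)
    have e1 : (q+1)*(2*ℓ+2) = q*(2*ℓ+1) + q + 2*ℓ + 2 := by ring
    have e2 : n*ℓ*(2*ℓ+2) = (n*ℓ)*(2*ℓ+2) := by ring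
    omega
  obtain ⟨u, rfl⟩ : ∃ u, q = n*ℓ + u := ⟨q - n*ℓ, by omega⟩
  have e3 : (n*ℓ + u)*(2*ℓ+1) = n*ℓ*(2*ℓ+2) + u*(2*ℓ+1) - n*ℓ := by
    have : (n*ℓ + u)*(2*ℓ+1) + n*ℓ = n*ℓ*(2*ℓ+2) + u*(2*ℓ+1) := by ring
    omega
  have hy2 : y + n*ℓ = u*(2*ℓ+1) + ρ := by
    have : (n*ℓ + u)*(2*ℓ+1) + n*ℓ = n*ℓ*(2*ℓ+2) + u*(2*ℓ+1) := by ring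
    omega
  by_cases hA : n*ℓ + 1 ≤ ρ
  · exact ⟨0, y, Or.inl rfl, ⟨u, ρ - n*ℓ, by omega, by omega⟩, by omega⟩
  · push_neg at hA
    -- v := nℓ - ρ;  y + v = u(2ℓ+1)
    obtain ⟨v, hv⟩ : ∃ v, n*ℓ = ρ + v := ⟨n*ℓ - ρ, by omega⟩
    have hy3 : y + v = u*(2*ℓ+1) := by omega
    obtain ⟨D, M, hDM, hMlt⟩ : ∃ D M, v = (2*ℓ+1) * D + M ∧ M < 2*ℓ+1 :=
      ⟨v / (2*ℓ+1), v % (2*ℓ+1), (Nat.div_add_mod v (2*ℓ+1)).symm, Nat.mod_lt _ (by omega)⟩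
    have htu : D + 2 ≤ u := by
      by_contra hcon
      push_neg at hcon
      have h5 : u*(2*ℓ+1) ≤ (D+1)*(2*ℓ+1) := Nat.mul_le_mul_right _ (by omega)
      have e6 : (D+1)*(2*ℓ+1) = (2*ℓ+1)*D + 2*ℓ+1 := by ring
      omega
    obtain ⟨w, rfl⟩ : ∃ w, u = D + 2 + w := ⟨u - (D+2), by omega⟩
    have e7 : (D+2+w)*(2*ℓ+1) = (2*ℓ+1)*D + w*(2*ℓ+1) + 4*ℓ + 2 := by ring
    have hyM : y + M = w*(2*ℓ+1) + 4*ℓ + 2 := by omega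
    rcases Nat.eq_zero_or_pos M with hM0 | hM0
    · -- y = (w+2)(2ℓ+1)
      refine ⟨0, y, Or.inl rfl, ⟨w + 2, 0, by omega, ?_⟩, by omega⟩
      have e8 : (w+2)*(2*ℓ+1) = w*(2*ℓ+1) + 4*ℓ + 2 := by ring
      omega
    · by_cases hM1 : M ≤ ℓ
      · -- d' = 2ℓ+1-M ∈ [ℓ+1, 2ℓ]
        refine ⟨2*ℓ+1-M, (w+1)*(2*ℓ+1), Or.inr (Or.inl ⟨hn, by omega, by omega⟩),
          ⟨w+1, 0, by omega, by omega⟩, ?_⟩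
        have e9 : (w+1)*(2*ℓ+1) = w*(2*ℓ+1) + 2*ℓ+1 := by ring
        omega
      · -- M ∈ [ℓ+1, 2ℓ]: d' = 4ℓ+2-M ∈ [2ℓ+2, 3ℓ+1]
        have hn2 : 2 ≤ n := by
          by_contra hc2
          push_neg at hc2
          have : n*ℓ ≤ 1*ℓ := Nat.mul_le_mul_right _ (by omega)
          omega
        have h2n : (2*2)*ℓ ≤ (2*n)*ℓ := Nat.mul_le_mul_right _ (by omega)
        have e5 : (2*2)*ℓ = 4*ℓ := by ring
        refine ⟨4*ℓ+2-M, w*(2*ℓ+1), Or.inr (Or.inr ⟨by omega, ?_⟩),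
          ⟨w, 0, by omega, by omega⟩, by omega⟩
        have e10 : 2*n*ℓ = (2*n)*ℓ := by ring
        omega

lemma coreL {ℓ : ℕ} (hℓ : 2 ≤ ℓ) (n d h : ℕ) (hpat : PatL ℓ (n+1) d)
    (hNSh : NS (2*ℓ+1) h) (hNS : NS (2*ℓ+1) (n * ((2*ℓ+1)*ℓ + ℓ) + (d + h))) :
    ∃ d' h', PatL ℓ n d' ∧ NS (2*ℓ+1) h' ∧ d + h = d' + h' := by
  rcases n with - | m
  · refine ⟨0, d + h, Or.inl rfl, ?_, by omega⟩
    have e : 0 * ((2*ℓ+1)*ℓ + ℓ) + (d + h) = d + h := by ring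
    rwa [e] at hNS
  · by_cases hp : PatL ℓ (m+1) d
    · exact ⟨d, h, hp, hNSh, rfl⟩
    · have e1 : 2*(m+2)*ℓ = 2*(m+1)*ℓ + 2*ℓ := by ring
      have hd1 : 2*(m+1)*ℓ + 1 ≤ d ∧ 2*ℓ+2 ≤ d := by
        unfold PatL at hpat hp
        omega
      have e2 : (m+1) * ((2*ℓ+1)*ℓ + ℓ) + (d + h) = (m+1)*ℓ*(2*ℓ+2) + (d + h) := by ring
      rw [e2] at hNS
      exact starLem hℓ (by omega) (by omega) hNS

/-- arithmetic contradiction for the `only if` direction. -/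
lemma witness_contra {ℓ r h₀ h₁ h₂ h₃ : ℕ} (hℓ : 2 ≤ ℓ) (hr1 : 1 ≤ r) (hr2 : r + 1 ≤ ℓ)
    (H0 : NS (2*ℓ+1) h₀) (H3 : NS (2*ℓ+1) h₃)
    (H1 : NS (2*ℓ+1) h₁) (H1s : (2*ℓ+1)*ℓ + r ≤ h₁)
    (H2 : NS (2*ℓ+1) h₂) (H2s : (2*ℓ+1)*ℓ + r ≤ h₂)
    (heq : 3*((2*ℓ+1)*ℓ + r) + 2*(ℓ-r) + 1 = ((2*ℓ+1)*ℓ + r) + h₀ + h₁ + h₂ + h₃) :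
    False := by
  have e1 : 3*((2*ℓ+1)*ℓ + r) = ((2*ℓ+1)*ℓ + r) + ((2*ℓ+1)*ℓ + r) + ((2*ℓ+1)*ℓ + r) := by
    ring
  obtain ⟨δ₁, hδ₁⟩ : ∃ δ, h₁ = ((2*ℓ+1)*ℓ + r) + δ := ⟨h₁ - ((2*ℓ+1)*ℓ + r), by omega⟩
  obtain ⟨δ₂, hδ₂⟩ : ∃ δ, h₂ = ((2*ℓ+1)*ℓ + r) + δ := ⟨h₂ - ((2*ℓ+1)*ℓ + r), by omega⟩
  have hsum : h₀ + δ₁ + δ₂ + h₃ = 2*(ℓ-r) + 1 := by omega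
  have hz0 : h₀ = 0 := NS_small H0 (by omega)
  have hz3 : h₃ = 0 := NS_small H3 (by omega)
  -- now δ₁ + δ₂ = 2(ℓ-r)+1 and each δᵢ ≤ ℓ-r
  have key : ∀ δ, δ ≤ 2*(ℓ-r)+1 → NS (2*ℓ+1) (((2*ℓ+1)*ℓ + r) + δ) → δ ≤ ℓ - r := by
    intro δ hδ hNSδ
    obtain ⟨u, ρ, hρu, hρa, heq2⟩ := NS_canon (by omega) hNSδ
    have swap : ℓ * (2*ℓ+1) = (2*ℓ+1) * ℓ := by ring
    have c1 : u ≤ ℓ := div_le (show r + δ < 2*ℓ+1 by omega) (by omega)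
    have c2 : ℓ ≤ u := div_le hρa (by omega)
    have hu : u = ℓ := le_antisymm c1 c2
    subst hu
    omega
  have k1 : δ₁ ≤ ℓ - r := key δ₁ (by omega) (hδ₁ ▸ H1)
  have k2 : δ₂ ≤ ℓ - r := key δ₂ (by omega) (hδ₂ ▸ H2)
  omega

section Support

variable {k : Type} [Field k] {H : AddSubmonoid ℕ}

/-- `x` is supported on `P`. -/
def msupp (x : ssr k H) (P : ℕ → Prop) : Prop :=
  ∀ n, ¬ P n → PowerSeries.coeff n (x : PowerSeries k) = 0

lemma msupp_mono {x : ssr k H} {P P' : ℕ → Prop} (h : msupp x P)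
    (hPP : ∀ n, P n → P' n) : msupp x P' :=
  fun n hn => h n (fun hP => hn (hPP n hP))

lemma msupp_self (x : ssr k H) : msupp x (· ∈ H) := fun n hn => x.2 n hn

lemma msupp_and {x : ssr k H} {P P' : ℕ → Prop} (h : msupp x P) (h' : msupp x P') :
    msupp x (fun n => P n ∧ P' n) := by
  classical
  intro n hn
  rcases Decidable.not_and_iff_or_not.mp hn with hn | hn
  · exact h n hn
  · exact h' n hn

lemma msupp_add {x y : ssr k H} {P : ℕ → Prop} (hx : msupp x P) (hy : msupp y P) :
    msupp (x + y) P := by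
  intro n hn
  have : ((x + y : ssr k H) : PowerSeries k) = (x : PowerSeries k) + y := rfl
  rw [this, map_add, hx n hn, hy n hn, add_zero]

lemma msupp_mul {x y : ssr k H} {P P' : ℕ → Prop} (hx : msupp x P) (hy : msupp y P') :
    msupp (x * y) (fun n => ∃ p q, P p ∧ P' q ∧ n = p + q) := by
  intro n hn
  have : ((x * y : ssr k H) : PowerSeries k) = (x : PowerSeries k) * y := rfl
  rw [this, PowerSeries.coeff_mul]
  apply Finset.sum_eq_zero
  rintro ⟨i, j⟩ hij
  replace hij : i + j = n := by simpa using hij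
  by_cases hi : P i
  · have hj : ¬ P' j := fun hj => hn ⟨i, j, hi, hj, hij.symm⟩
    rw [hy j hj, mul_zero]
  · rw [hx i hi, zero_mul]

lemma msupp_tp {g : ℕ} (hg : g ∈ H) : msupp (tp k H g hg) (· = g) := by
  intro n hn
  have : ((tp k H g hg : ssr k H) : PowerSeries k) = PowerSeries.X ^ g := rfl
  rw [this, PowerSeries.coeff_X_pow, if_neg hn]

lemma coeff_tp_self {g : ℕ} (hg : g ∈ H) :
    PowerSeries.coeff g ((tp k H g hg : ssr k H) : PowerSeries k) = 1 := by
  have : ((tp k H g hg : ssr k H) : PowerSeries k) = PowerSeries.X ^ g := rfl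
  rw [this, PowerSeries.coeff_X_pow, if_pos rfl]

lemma tp_mul {m n : ℕ} (hm : m ∈ H) (hn : n ∈ H) :
    tp k H m hm * tp k H n hn = tp k H (m + n) (H.add_mem hm hn) := by
  apply Subtype.ext
  show (PowerSeries.X : PowerSeries k) ^ m * PowerSeries.X ^ n = PowerSeries.X ^ (m + n)
  rw [pow_add]

/-- the workhorse: an element supported on `G + H` (with `G` finite) lies in any
ideal containing the monomials `t^g`, `g ∈ G`. -/
lemma mem_of_msupp (G : Finset ℕ) (hG : ∀ g ∈ G, g ∈ H) (J : Ideal (ssr k H))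
    (hJ : ∀ g, g ∈ G → ∀ hgH : g ∈ H, tp k H g hgH ∈ J)
    (x : ssr k H) (hx : msupp x (fun n => ∃ g ∈ G, ∃ h ∈ H, n = g + h)) : x ∈ J := by
  classical
  set S : ℕ → Prop := fun n => ∃ g ∈ G, ∃ h ∈ H, n = g + h with hS
  have hφ : ∀ n, S n → (if hn : S n then hn.choose else 0) ∈ G ∧
      ∃ h ∈ H, n = (if hn : S n then hn.choose else 0) + h := by
    intro n hn
    rw [dif_pos hn]
    obtain ⟨hg, h, hh, hnh⟩ := hn.choose_spec
    exact ⟨hg, h, hh, hnh⟩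
  set φ : ℕ → ℕ := fun n => if hn : S n then hn.choose else 0 with hφdef
  have hφ : ∀ n, S n → φ n ∈ G ∧ ∃ h ∈ H, n = φ n + h := hφ
  -- coefficient series
  have hYmem : ∀ g : ℕ, (PowerSeries.mk (fun m =>
      if S (g + m) ∧ φ (g + m) = g then PowerSeries.coeff (g + m) (x : PowerSeries k)
      else 0) : PowerSeries k) ∈ ssr k H := by
    intro g m hm
    rw [PowerSeries.coeff_mk]
    rw [if_neg]
    rintro ⟨hSgm, hφgm⟩
    obtain ⟨-, h, hh, hgh⟩ := hφ _ hSgm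
    rw [hφgm] at hgh
    have : m = h := by omega
    exact hm (this ▸ hh)
  set Y : ℕ → ssr k H := fun g => ⟨PowerSeries.mk (fun m =>
      if S (g + m) ∧ φ (g + m) = g then PowerSeries.coeff (g + m) (x : PowerSeries k)
      else 0), hYmem g⟩ with hY
  have coeffY : ∀ (g : ℕ) (n : ℕ), g ≤ n →
      PowerSeries.coeff n ((PowerSeries.X : PowerSeries k) ^ g * (Y g : PowerSeries k)) =
      (if S n ∧ φ n = g then PowerSeries.coeff n (x : PowerSeries k) else 0) := by
    intro g n hgn
    obtain ⟨m, rfl⟩ : ∃ m, n = g + m := ⟨n - g, by omega⟩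
    rw [mul_comm, add_comm g m, PowerSeries.coeff_mul_X_pow]
    have hcY : (Y g : PowerSeries k) = PowerSeries.mk (fun m =>
        if S (g + m) ∧ φ (g + m) = g then PowerSeries.coeff (g + m) (x : PowerSeries k)
        else 0) := rfl
    rw [hcY, PowerSeries.coeff_mk, add_comm m g]
  have coeffY0 : ∀ (g : ℕ) (n : ℕ), ¬ (g ≤ n) →
      PowerSeries.coeff n ((PowerSeries.X : PowerSeries k) ^ g * (Y g : PowerSeries k))
        = 0 := by
    intro g n hgn
    rw [PowerSeries.coeff_mul]
    apply Finset.sum_eq_zero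
    rintro ⟨i, j⟩ hij
    replace hij : i + j = n := by simpa using hij
    rw [PowerSeries.coeff_X_pow, if_neg (by omega), zero_mul]
  have key : (x : PowerSeries k) =
      ∑ g ∈ G.attach, (PowerSeries.X : PowerSeries k) ^ (g : ℕ) * (Y (g : ℕ)) := by
    ext n
    rw [map_sum]
    by_cases hn : S n
    · obtain ⟨hg0, h, hh, hnh⟩ := hφ n hn
      rw [Finset.sum_eq_single_of_mem (⟨φ n, hg0⟩ : {g // g ∈ G}) (Finset.mem_attach _ _)]
      · rw [coeffY (φ n) n (by omega), if_pos ⟨hn, rfl⟩]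
      · intro b _ hbne
        by_cases hb : (b : ℕ) ≤ n
        · rw [coeffY _ n hb, if_neg]
          rintro ⟨-, hfb⟩
          exact hbne (Subtype.ext hfb.symm)
        · exact coeffY0 _ n hb
    · rw [hx n hn]
      symm
      apply Finset.sum_eq_zero
      intro b _
      by_cases hb : (b : ℕ) ≤ n
      · rw [coeffY _ n hb, if_neg (fun hc => hn hc.1)]
      · exact coeffY0 _ n hb
  have keyx : x = ∑ g ∈ G.attach, tp k H (g : ℕ) (hG g g.2) * Y (g : ℕ) := by
    apply Subtype.ext
    rw [key, AddSubmonoidClass.coe_finset_sum]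
    exact Finset.sum_congr rfl (fun g _ => rfl)
  rw [keyx]
  exact Ideal.sum_mem _ (fun g _ => Ideal.mul_mem_right _ _ (hJ g g.2 (hG g g.2)))

end Support

section Bridge

variable {k : Type} [Field k] {ℓ r : ℕ} {H : AddSubmonoid ℕ}

lemma memH_iff (hH : H = AddSubmonoid.closure {2*ℓ+1, 2*ℓ+1+1}) (n : ℕ) :
    n ∈ H ↔ NS (2*ℓ+1) n := by
  subst hH
  constructor
  · intro hn
    refine AddSubmonoid.closure_induction ?_ ?_ ?_ hn
    · rintro x hx
      simp only [Set.mem_insert_iff, Set.mem_singleton_iff] at hx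
      rcases hx with rfl | rfl
      · exact ⟨1, 0, by omega, by ring⟩
      · exact ⟨1, 1, le_rfl, by ring⟩
    · exact NS_zero _
    · intro x y _ _ hx hy
      exact NS_add hx hy
  · rintro ⟨u, ρ, hρ, rfl⟩
    obtain ⟨w, rfl⟩ : ∃ w, u = ρ + w := ⟨u - ρ, by omega⟩
    have e : (ρ + w) * (2*ℓ+1) + ρ = w * (2*ℓ+1) + ρ * (2*ℓ+1+1) := by ring
    rw [e]
    refine add_mem ?_ ?_
    · have h1 : (2*ℓ+1 : ℕ) ∈ AddSubmonoid.closure ({2*ℓ+1, 2*ℓ+1+1} : Set ℕ) :=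
        AddSubmonoid.subset_closure (by simp)
      simpa [nsmul_eq_mul] using AddSubmonoid.nsmul_mem _ h1 w
    · have h1 : (2*ℓ+1+1 : ℕ) ∈ AddSubmonoid.closure ({2*ℓ+1, 2*ℓ+1+1} : Set ℕ) :=
        AddSubmonoid.subset_closure (by simp)
      simpa [nsmul_eq_mul] using AddSubmonoid.nsmul_mem _ h1 ρ

lemma Q_msupp (hH : H = AddSubmonoid.closure {2*ℓ+1, 2*ℓ+1+1})
    {s : ℕ} {hs : s ∈ H} {Q : Ideal (ssr k H)}
    (hQ : Q = Ideal.span {tp k H s hs}) {x : ssr k H} (hx : x ∈ Q) :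
    msupp x (fun m => ∃ h, NS (2*ℓ+1) h ∧ m = s + h) := by
  subst hQ
  obtain ⟨c, rfl⟩ := Ideal.mem_span_singleton.mp hx
  refine msupp_mono (msupp_mul (msupp_tp hs) (msupp_self c)) ?_
  rintro n ⟨p, q, rfl, hq, rfl⟩
  exact ⟨q, (memH_iff hH q).mp hq, rfl⟩

lemma mIdeal_pow_msupp (hH : H = AddSubmonoid.closure {2*ℓ+1, 2*ℓ+1+1})
    {haH : 2*ℓ+1 ∈ H} {ha1H : 2*ℓ+1+1 ∈ H} {𝔪 : Ideal (ssr k H)}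
    (h𝔪 : 𝔪 = Ideal.span {tp k H (2*ℓ+1) haH, tp k H (2*ℓ+1+1) ha1H}) :
    ∀ j x, x ∈ 𝔪 ^ j → msupp x (fun m => NS (2*ℓ+1) m ∧ j*(2*ℓ+1) ≤ m) := by
  have base : ∀ x, x ∈ 𝔪 → msupp x (fun m => NS (2*ℓ+1) m ∧ 2*ℓ+1 ≤ m) := by
    intro x hx
    rw [h𝔪] at hx
    obtain ⟨c, d, hcd⟩ := Ideal.mem_span_pair.mp hx
    rw [← hcd]
    refine msupp_add (msupp_mono (msupp_mul (msupp_self c) (msupp_tp haH)) ?_)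
        (msupp_mono (msupp_mul (msupp_self d) (msupp_tp ha1H)) ?_)
    · rintro n ⟨p, q, hp, rfl, rfl⟩
      exact ⟨NS_add ((memH_iff hH p).mp hp) ⟨1, 0, by omega, by ring⟩, by omega⟩
    · rintro n ⟨p, q, hp, rfl, rfl⟩
      refine ⟨NS_add ((memH_iff hH p).mp hp) ⟨1, 1, le_rfl, by ring⟩, by omega⟩
  intro j
  induction j with
  | zero =>
    intro x _
    refine msupp_mono (msupp_self x) ?_
    intro n hn
    exact ⟨(memH_iff hH n).mp hn, by omega⟩
  | succ j ih =>
    intro x hx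
    rw [pow_succ] at hx
    refine Submodule.mul_induction_on hx ?_ (fun a b ha hb => msupp_add ha hb)
    intro p hp q hq
    refine msupp_mono (msupp_mul (ih p hp) (base q hq)) ?_
    rintro n ⟨p', q', ⟨h1, h2⟩, ⟨h3, h4⟩, rfl⟩
    refine ⟨NS_add h1 h3, ?_⟩
    have e : (j+1)*(2*ℓ+1) = j*(2*ℓ+1) + (2*ℓ+1) := by ring
    omega

lemma I_msupp (hH : H = AddSubmonoid.closure {2*ℓ+1, 2*ℓ+1+1})
    {haH : 2*ℓ+1 ∈ H} {ha1H : 2*ℓ+1+1 ∈ H} {𝔪 : Ideal (ssr k H)}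
    (h𝔪 : 𝔪 = Ideal.span {tp k H (2*ℓ+1) haH, tp k H (2*ℓ+1+1) ha1H})
    {s : ℕ} {hs : s ∈ H} {Q : Ideal (ssr k H)}
    (hQ : Q = Ideal.span {tp k H s hs})
    {I : Ideal (ssr k H)} (hI : I = Submodule.colon Q ((𝔪 ^ (2*ℓ+1-1) : Ideal (ssr k H)) : Set (ssr k H))) :
    ∀ x ∈ I, msupp x (fun m => NS (2*ℓ+1) m ∧ s ≤ m) := by
  intro x hx n hn
  by_contra hc
  apply hn
  have hNSn : NS (2*ℓ+1) n := by
    by_cases hnH : n ∈ H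
    · exact (memH_iff hH n).mp hnH
    · exact absurd (x.2 n hnH) hc
  refine ⟨hNSn, ?_⟩
  rw [hI] at hx
  have hcolon := Submodule.mem_colon.mp hx
  have key : ∀ j, j < 2*ℓ+1 → ∃ hj, NS (2*ℓ+1) hj ∧ n + (2*ℓ*(2*ℓ+1) + j) = s + hj := by
    intro j hj
    have hejH : 2*ℓ*(2*ℓ+1) + j ∈ H := (memH_iff hH _).mpr (NS_conductor (by omega))
    have hmem : tp k H (2*ℓ*(2*ℓ+1) + j) hejH ∈ 𝔪 ^ (2*ℓ+1-1) := by
      have h1 : tp k H (2*ℓ*(2*ℓ+1) + j) hejH =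
          (tp k H (2*ℓ+1) haH) ^ (2*ℓ - j) * (tp k H (2*ℓ+1+1) ha1H) ^ j := by
        apply Subtype.ext
        show (PowerSeries.X : PowerSeries k) ^ (2*ℓ*(2*ℓ+1) + j) =
          ((PowerSeries.X : PowerSeries k) ^ (2*ℓ+1)) ^ (2*ℓ - j) *
          ((PowerSeries.X : PowerSeries k) ^ (2*ℓ+1+1)) ^ j
        rw [← pow_mul, ← pow_mul, ← pow_add]
        congr 1
        obtain ⟨j', hj1, hj2⟩ : ∃ j', 2*ℓ - j = j' ∧ 2*ℓ = j + j' := ⟨2*ℓ-j, rfl, by omega⟩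
        rw [hj1, hj2]
        ring
      rw [h1]
      have h2 : 2*ℓ+1-1 = (2*ℓ - j) + j := by omega
      rw [h2, pow_add]
      exact Ideal.mul_mem_mul
        (Ideal.pow_mem_pow (h𝔪 ▸ Ideal.subset_span (by simp)) _)
        (Ideal.pow_mem_pow (h𝔪 ▸ Ideal.subset_span (by simp)) _)
    have hxq := hcolon _ hmem
    rw [smul_eq_mul] at hxq
    have hsupp := Q_msupp hH hQ hxq
    have hco : PowerSeries.coeff (n + (2*ℓ*(2*ℓ+1) + j))
        ((x * tp k H _ hejH : ssr k H) : PowerSeries k) = PowerSeries.coeff n x := by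
      have hcoe : ((x * tp k H _ hejH : ssr k H) : PowerSeries k) =
          (x : PowerSeries k) * PowerSeries.X ^ (2*ℓ*(2*ℓ+1)+j) := rfl
      rw [hcoe, PowerSeries.coeff_mul_X_pow]
    by_contra hnot
    exact hc (hco ▸ hsupp _ hnot)
  obtain ⟨h₀, hNS₀, heq₀⟩ := key 0 (by omega)
  have hall : ∀ j, j < 2*ℓ+1 → NS (2*ℓ+1) (h₀ + j) := by
    intro j hj
    obtain ⟨hj', hNSj, heqj⟩ := key j hj
    have he : hj' = h₀ + j := by omega
    exact he ▸ hNSj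
  have hcons := NS_consec hall
  omega

lemma tp_mem_I (hr : r ≤ ℓ)
    (hH : H = AddSubmonoid.closure {2*ℓ+1, 2*ℓ+1+1})
    {haH : 2*ℓ+1 ∈ H} {ha1H : 2*ℓ+1+1 ∈ H} {𝔪 : Ideal (ssr k H)}
    (h𝔪 : 𝔪 = Ideal.span {tp k H (2*ℓ+1) haH, tp k H (2*ℓ+1+1) ha1H})
    {s : ℕ} {hs : s ∈ H} {Q : Ideal (ssr k H)}
    (hQ : Q = Ideal.span {tp k H s hs})
    {I : Ideal (ssr k H)} (hI : I = Submodule.colon Q ((𝔪 ^ (2*ℓ+1-1) : Ideal (ssr k H)) : Set (ssr k H)))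
    (hsval : s = (2*ℓ+1)*ℓ + r) :
    ∀ e, NS (2*ℓ+1) e → s ≤ e → ∀ heH : e ∈ H, tp k H e heH ∈ I := by
  intro e he hes heH
  rw [hI, Submodule.mem_colon]
  intro p hp
  rw [smul_eq_mul]
  have hp' := mIdeal_pow_msupp hH h𝔪 (2*ℓ+1-1) p hp
  have hprod := msupp_mul (msupp_tp heH) hp'
  rw [hQ]
  refine mem_of_msupp {s} (fun g hg => by rwa [Finset.mem_singleton.mp hg]) _ ?_ _ ?_
  · intro g hg hgH
    have hgs : g = s := Finset.mem_singleton.mp hg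
    subst hgs
    exact Ideal.subset_span rfl
  · refine msupp_mono hprod ?_
    rintro n ⟨p', q', rfl, ⟨hq1, hq2⟩, rfl⟩
    have e0 : 2*ℓ+1-1 = 2*ℓ := by omega
    rw [e0] at hq2
    refine ⟨s, Finset.mem_singleton_self s, (p' - s) + q', ?_, by omega⟩
    exact (memH_iff hH _).mpr (NS_conductor (by omega))

end Bridge

section Bridge2

variable {k : Type} [Field k] {ℓ r : ℕ} {H : AddSubmonoid ℕ}
variable (hH : H = AddSubmonoid.closure {2*ℓ+1, 2*ℓ+1+1})
variable {haH : 2*ℓ+1 ∈ H} {ha1H : 2*ℓ+1+1 ∈ H} {𝔪 : Ideal (ssr k H)}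
variable (h𝔪 : 𝔪 = Ideal.span {tp k H (2*ℓ+1) haH, tp k H (2*ℓ+1+1) ha1H})
variable {s : ℕ} {hs : s ∈ H} {Q : Ideal (ssr k H)}
variable (hQ : Q = Ideal.span {tp k H s hs})
variable {I : Ideal (ssr k H)} (hI : I = Submodule.colon Q ((𝔪 ^ (2*ℓ+1-1) : Ideal (ssr k H)) : Set (ssr k H)))

include hH h𝔪 hQ hI

lemma Ipow_msupp :
    ∀ n x, x ∈ I ^ n → msupp x (fun m => ∃ τ, sumN (fun h => NS (2*ℓ+1) h ∧ s ≤ h) n τ ∧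
      ∃ h', NS (2*ℓ+1) h' ∧ m = τ + h') := by
  intro n
  induction n with
  | zero =>
    intro x _
    refine msupp_mono (msupp_self x) ?_
    intro m hm
    exact ⟨0, rfl, m, (memH_iff hH m).mp hm, (Nat.zero_add m).symm⟩
  | succ n ih =>
    intro x hx
    rw [pow_succ] at hx
    refine Submodule.mul_induction_on hx ?_ (fun a b ha hb => msupp_add ha hb)
    intro p hp q hq
    refine msupp_mono (msupp_mul (ih p hp) (I_msupp hH h𝔪 hQ hI q hq)) ?_
    rintro m ⟨p', q', ⟨τ, hτ, h', hNSh', rfl⟩, hq', rfl⟩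
    exact ⟨τ + q', ⟨τ, q', hτ, hq', rfl⟩, h', hNSh', by omega⟩

lemma tp_sumN_mem (hr : r ≤ ℓ) (hsval : s = (2*ℓ+1)*ℓ + r) :
    ∀ n δ, sumN (dc ℓ r) n δ → ∀ hmem : n*s + δ ∈ H, tp k H (n*s + δ) hmem ∈ I ^ n := by
  intro n
  induction n with
  | zero =>
    intro δ h hmem
    rw [pow_zero, Ideal.one_eq_top]
    exact Submodule.mem_top
  | succ n ih =>
    rintro δ ⟨p, q, hp, hq, rfl⟩ hmem
    have hm1 : n*s + p ∈ H := by
      refine (memH_iff hH _).mpr ?_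
      rw [hsval]
      exact sumN_dc_NS hr n p hp
    have hm2 : s + q ∈ H := by
      refine (memH_iff hH _).mpr ?_
      rw [hsval]
      exact dc_NS hr hq
    have heq : tp k H ((n+1)*s + (p+q)) hmem = tp k H (n*s+p) hm1 * tp k H (s+q) hm2 := by
      rw [tp_mul hm1 hm2]
      apply Subtype.ext
      show (PowerSeries.X : PowerSeries k) ^ ((n+1)*s + (p+q)) =
        (PowerSeries.X : PowerSeries k) ^ ((n*s+p) + (s+q))
      have e : (n+1)*s + (p+q) = (n*s+p) + (s+q) := by ring
      rw [e]
    rw [heq, pow_succ]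
    refine Ideal.mul_mem_mul (ih p hp hm1)
      (tp_mem_I hr hH h𝔪 hQ hI hsval (s+q) ?_ (by omega) hm2)
    rw [hsval]
    exact dc_NS hr hq

/-- the `if` direction skeleton, for a pattern family `Pat` describing sums of
generator-offsets. -/
lemma ifdir (hℓ2 : 2 ≤ ℓ) (hr : r ≤ ℓ) (hsval : s = (2*ℓ+1)*ℓ + r)
    (Pat : ℕ → ℕ → Prop)
    (hfwd : ∀ n δ, sumN (dc ℓ r) n δ → Pat n δ)
    (hbwd : ∀ n δ, Pat n δ → sumN (dc ℓ r) n δ)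
    (hbound : ∀ n δ, Pat n δ → δ ≤ 2*n*ℓ)
    (hcore : ∀ n d h, Pat (n+1) d → NS (2*ℓ+1) h →
      NS (2*ℓ+1) (n * ((2*ℓ+1)*ℓ + r) + (d + h)) →
      ∃ d' h', Pat n d' ∧ NS (2*ℓ+1) h' ∧ d + h = d' + h')
    (n : ℕ) : Q ⊓ I ^ (n+1) ≤ Q * I ^ n := by
  classical
  rintro x ⟨hxQ, hxI⟩
  have h1 := Q_msupp hH hQ hxQ
  have h2 := Ipow_msupp hH h𝔪 hQ hI (n+1) x hxI
  have h3 := msupp_and h1 h2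
  have h4 : msupp x (fun m => ∃ d' h', Pat n d' ∧ NS (2*ℓ+1) h' ∧
      m = ((n+1)*s + d') + h') := by
    refine msupp_mono h3 ?_
    rintro m ⟨⟨h₁, hNS₁, rfl⟩, τm, hτm, h'', hNSh'', hmeq⟩
    obtain ⟨δ, h₃, hδ, hNS₃, rfl⟩ := sumN_NS_decomp hr (n+1) τm
      (by rw [← hsval]; exact hτm)
    have hpat := hfwd (n+1) δ hδ
    have e1 : (n+1) * ((2*ℓ+1)*ℓ+r) = n * ((2*ℓ+1)*ℓ+r) + ((2*ℓ+1)*ℓ+r) := by ring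
    have hh₁ : h₁ = n * ((2*ℓ+1)*ℓ+r) + (δ + (h₃ + h'')) := by
      rw [hsval] at hmeq
      omega
    obtain ⟨d', h', hpat', hNSh', heq'⟩ :=
      hcore n δ (h₃ + h'') hpat (NS_add hNS₃ hNSh'') (hh₁ ▸ hNS₁)
    refine ⟨d', h', hpat', hNSh', ?_⟩
    rw [hsval] at hmeq ⊢
    have e2 : (n+1) * ((2*ℓ+1)*ℓ+r) + d' = n * ((2*ℓ+1)*ℓ+r) + ((2*ℓ+1)*ℓ+r) + d' := by
      ring
    omega
  refine mem_of_msupp (((Finset.range (2*n*ℓ+1)).filter (fun d => Pat n d)).image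
    (fun d => (n+1)*s + d)) ?_ _ ?_ _ ?_
  · intro g hg
    simp only [Finset.mem_image, Finset.mem_filter, Finset.mem_range] at hg
    obtain ⟨d, ⟨-, hd⟩, rfl⟩ := hg
    refine (memH_iff hH _).mpr ?_
    have h5 := NS_add (⟨ℓ, r, hr, by ring⟩ : NS (2*ℓ+1) ((2*ℓ+1)*ℓ+r))
      (sumN_dc_NS hr n d (hbwd n d hd))
    have e : (n+1)*s + d = ((2*ℓ+1)*ℓ+r) + (n * ((2*ℓ+1)*ℓ+r) + d) := by
      rw [hsval]; ring
    rwa [← e] at h5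
  · intro g hg hgH
    simp only [Finset.mem_image, Finset.mem_filter, Finset.mem_range] at hg
    obtain ⟨d, ⟨-, hd⟩, rfl⟩ := hg
    have hm1 : n*s + d ∈ H := by
      refine (memH_iff hH _).mpr ?_
      rw [hsval]
      exact sumN_dc_NS hr n d (hbwd n d hd)
    have heq : tp k H ((n+1)*s + d) hgH = tp k H s hs * tp k H (n*s+d) hm1 := by
      rw [tp_mul hs hm1]
      apply Subtype.ext
      show (PowerSeries.X : PowerSeries k) ^ ((n+1)*s + d) =
        (PowerSeries.X : PowerSeries k) ^ (s + (n*s+d))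
      have e : (n+1)*s + d = s + (n*s+d) := by ring
      rw [e]
    rw [heq]
    exact Ideal.mul_mem_mul (hQ ▸ Ideal.subset_span rfl)
      (tp_sumN_mem hH h𝔪 hQ hI hr hsval n d (hbwd n d hd) hm1)
  · refine msupp_mono h4 ?_
    rintro m ⟨d', h', hpat', hNSh', rfl⟩
    refine ⟨(n+1)*s + d', ?_, h', (memH_iff hH _).mpr hNSh', rfl⟩
    simp only [Finset.mem_image, Finset.mem_filter, Finset.mem_range]
    exact ⟨d', ⟨by have := hbound n d' hpat'; omega, hpat'⟩, rfl⟩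

end Bridge2

section OnlyIf

variable {k : Type} [Field k] {ℓ r : ℕ} {H : AddSubmonoid ℕ}
variable (hH : H = AddSubmonoid.closure {2*ℓ+1, 2*ℓ+1+1})
variable {haH : 2*ℓ+1 ∈ H} {ha1H : 2*ℓ+1+1 ∈ H} {𝔪 : Ideal (ssr k H)}
variable (h𝔪 : 𝔪 = Ideal.span {tp k H (2*ℓ+1) haH, tp k H (2*ℓ+1+1) ha1H})
variable {s : ℕ} {hs : s ∈ H} {Q : Ideal (ssr k H)}
variable (hQ : Q = Ideal.span {tp k H s hs})
variable {I : Ideal (ssr k H)} (hI : I = Submodule.colon Q ((𝔪 ^ (2*ℓ+1-1) : Ideal (ssr k H)) : Set (ssr k H)))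

include hH h𝔪 hQ hI

lemma onlyif (hℓ2 : 2 ≤ ℓ) (hr1 : 1 ≤ r) (hr2 : r+1 ≤ ℓ) (hsval : s = (2*ℓ+1)*ℓ + r)
    (hint : Q ⊓ I ^ 3 = Q * I ^ 2) : False := by
  have hNSs : NS (2*ℓ+1) s := hsval ▸ ⟨ℓ, r, by omega, by ring⟩
  have hNS2s : NS (2*ℓ+1) (2*s + (2*(ℓ-r) + 1)) := by
    apply NS_conductor
    rw [hsval]
    have e : 2*((2*ℓ+1)*ℓ+r) = 2*ℓ*(2*ℓ+1) + 2*r := by ring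
    omega
  have hNSm : NS (2*ℓ+1) (3*s + 2*(ℓ-r) + 1) := by
    have h3 := NS_add hNSs hNS2s
    have e : s + (2*s + (2*(ℓ-r) + 1)) = 3*s + 2*(ℓ-r) + 1 := by ring
    rwa [e] at h3
  have hmH : 3*s + 2*(ℓ-r) + 1 ∈ H := (memH_iff hH _).mpr hNSm
  have h2sH : 2*s + (2*(ℓ-r) + 1) ∈ H := (memH_iff hH _).mpr hNS2s
  have htpQ : tp k H _ hmH ∈ Q := by
    rw [hQ, Ideal.mem_span_singleton]
    refine ⟨tp k H _ h2sH, ?_⟩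
    rw [tp_mul hs h2sH]
    apply Subtype.ext
    show (PowerSeries.X : PowerSeries k) ^ (3*s + 2*(ℓ-r) + 1) =
      (PowerSeries.X : PowerSeries k) ^ (s + (2*s + (2*(ℓ-r) + 1)))
    have e : 3*s + 2*(ℓ-r) + 1 = s + (2*s + (2*(ℓ-r) + 1)) := by ring
    rw [e]
  -- tp m ∈ I^3, via m = (s + (ℓ-r)) + ((s + (ℓ-r)) + (s+1))
  have hNSe1 : NS (2*ℓ+1) (s + (ℓ-r)) := by
    have := dc_NS (show r ≤ ℓ by omega) (Or.inl (le_refl (ℓ-r)))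
    rwa [hsval]
  have hNSe3 : NS (2*ℓ+1) (s + 1) := by
    have := dc_NS (show r ≤ ℓ by omega) (Or.inl (show 1 ≤ ℓ - r by omega))
    rwa [hsval]
  have he1H : s + (ℓ-r) ∈ H := (memH_iff hH _).mpr hNSe1
  have he3H : s + 1 ∈ H := (memH_iff hH _).mpr hNSe3
  have htpe1 : tp k H _ he1H ∈ I :=
    tp_mem_I (by omega) hH h𝔪 hQ hI hsval _ hNSe1 (by omega) he1H
  have htpe3 : tp k H _ he3H ∈ I :=
    tp_mem_I (by omega) hH h𝔪 hQ hI hsval _ hNSe3 (by omega) he3H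
  have htpI3 : tp k H _ hmH ∈ I ^ 3 := by
    have key : tp k H _ hmH =
        (tp k H _ he1H * tp k H _ he1H) * tp k H _ he3H := by
      rw [tp_mul he1H he1H, tp_mul (H.add_mem he1H he1H) he3H]
      apply Subtype.ext
      show (PowerSeries.X : PowerSeries k) ^ (3*s + 2*(ℓ-r) + 1) =
        (PowerSeries.X : PowerSeries k) ^ ((s + (ℓ-r)) + (s + (ℓ-r)) + (s + 1))
      have e : 3*s + 2*(ℓ-r) + 1 = (s + (ℓ-r)) + (s + (ℓ-r)) + (s + 1) := by ring
      rw [e]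
    rw [key, show (3:ℕ) = 2+1 from rfl, pow_succ, pow_two]
    exact Ideal.mul_mem_mul (Ideal.mul_mem_mul htpe1 htpe1) htpe3
  have hQI2 : tp k H _ hmH ∈ Q * I ^ 2 := by
    rw [← hint]
    exact Submodule.mem_inf.mpr ⟨htpQ, htpI3⟩
  have hsupp : msupp (tp k H _ hmH) (fun mm => ∃ p q,
      (∃ h, NS (2*ℓ+1) h ∧ p = s + h) ∧
      (∃ τ, sumN (fun h => NS (2*ℓ+1) h ∧ s ≤ h) 2 τ ∧
        ∃ h', NS (2*ℓ+1) h' ∧ q = τ + h') ∧ mm = p + q) := by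
    refine Submodule.mul_induction_on hQI2 ?_ ?_
    · intro p hp q hq
      exact msupp_mul (Q_msupp hH hQ hp) (Ipow_msupp hH h𝔪 hQ hI 2 q hq)
    · intro a b ha hb
      exact msupp_add ha hb
  have hmm : ∃ p q,
      (∃ h, NS (2*ℓ+1) h ∧ p = s + h) ∧
      (∃ τ, sumN (fun h => NS (2*ℓ+1) h ∧ s ≤ h) 2 τ ∧
        ∃ h', NS (2*ℓ+1) h' ∧ q = τ + h') ∧ 3*s + 2*(ℓ-r) + 1 = p + q := by
    by_contra hno
    have h0 := hsupp _ hno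
    rw [coeff_tp_self hmH] at h0
    exact one_ne_zero h0
  obtain ⟨p, q, ⟨h₀, hNS₀, rfl⟩, ⟨τ, hτ, h₃, hNS₃, rfl⟩, hmeq⟩ := hmm
  obtain ⟨p1, q1, hp1, hq1, rfl⟩ := hτ
  obtain ⟨p0, q0, hp0, hq0, rfl⟩ := hp1
  have hp00 : p0 = 0 := hp0
  subst hp00
  refine witness_contra hℓ2 hr1 hr2 hNS₀ hNS₃ hq0.1 (hsval ▸ hq0.2) hq1.1 (hsval ▸ hq1.2) ?_
  rw [hsval] at hmeq
  omega

end OnlyIf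
/-- Corollary 3.10: for `a = 2ℓ+1 ≥ 5`, `s = aℓ + r` with `0 ≤ r ≤ ℓ`, the associated
graded ring `G(I)` of `I = (t^s) : 𝔪^{a-1}` is Cohen-Macaulay (equivalently,
`Q ∩ I^{n+1} = QI^n` for all `n`) if and only if `r = 0` or `r = ℓ`. -/
theorem stmt19 (k : Type) [Field k] (a ℓ : ℕ) (hℓ2 : 2 ≤ ℓ) (haval : a = 2 * ℓ + 1)
    (H : AddSubmonoid ℕ) (hH : H = AddSubmonoid.closure {a, a + 1})
    (haH : a ∈ H) (ha1H : a + 1 ∈ H)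
    (r : ℕ) (hr : r ≤ ℓ)
    (s : ℕ) (hsval : s = a * ℓ + r) (hs : s ∈ H)
    (𝔪 : Ideal (ssr k H)) (h𝔪 : 𝔪 = Ideal.span {tp k H a haH, tp k H (a + 1) ha1H})
    (Q : Ideal (ssr k H)) (hQ : Q = Ideal.span {tp k H s hs})
    (I : Ideal (ssr k H)) (hI : I = Submodule.colon Q ((𝔪 ^ (a - 1) : Ideal (ssr k H)) : Set (ssr k H))) :
    (∀ n : ℕ, Q ⊓ I ^ (n + 1) = Q * I ^ n) ↔ (r = 0 ∨ r = ℓ) := by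
  subst haval
  subst hsval
  constructor
  · intro hall
    by_contra hne
    push_neg at hne
    exact onlyif hH h𝔪 hQ hI hℓ2 (by omega) (by omega) rfl (hall 2)
  · intro hcase n
    refine le_antisymm ?_ ?_
    · rcases hcase with rfl | rfl
      · -- r = 0
        refine ifdir hH h𝔪 hQ hI hℓ2 (by omega) rfl (fun n d => d ≤ n*ℓ)
          pat0_fwd pat0_bwd ?_ ?_ n
        · intro n δ hδ
          have h1 : n*ℓ ≤ (2*n)*ℓ := Nat.mul_le_mul_right _ (by omega)
          omega
        · intro n d h hpat hNSh hNS
          have e : n*((2*ℓ+1)*ℓ+0) = n*((2*ℓ+1)*ℓ) := by ring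
          rw [e] at hNS
          exact core0 n d h hNSh hNS
      · -- r = ℓ
        refine ifdir hH h𝔪 hQ hI hℓ2 le_rfl rfl (PatL r)
          (patL_fwd hℓ2) (patL_bwd hℓ2) ?_ ?_ n
        · intro n δ hδ
          have h1 : (2*1)*r ≤ (2*n)*r ∨ n = 0 := by
            rcases Nat.eq_zero_or_pos n with h | h
            · exact Or.inr h
            · exact Or.inl (Nat.mul_le_mul_right _ (by omega))
          have e3 : (2*1)*r = 2*r := by ring
          have e4 : 2*0*r = 0 := by ring
          unfold PatL at hδ
          rcases h1 with h1 | rfl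
          · omega
          · omega
        · intro n d h hpat hNSh hNS
          exact coreL hℓ2 n d h hpat hNSh hNS
    · refine le_inf Ideal.mul_le_left ?_
      have hQI : Q ≤ I := by
        rw [hQ]
        refine Ideal.span_le.mpr ?_
        rintro y hy
        rw [Set.mem_singleton_iff] at hy
        subst hy
        exact tp_mem_I hr hH h𝔪 hQ hI rfl ((2*ℓ+1)*ℓ+r) ⟨ℓ, r, hr, by ring⟩ le_rfl hs
      calc Q * I ^ n ≤ I * I ^ n := Ideal.mul_mono hQI le_rfl
        _ = I ^ (n+1) := (pow_succ' I n).symm
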